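/- Let B00, C^1,...,C^d, B^{jk} (j,k=1..d) be real n×n matrices. Define B(ξ0,ξ) = ξ0² B00 + ξ0 Σ_j ξ_j C^j + Σ_{j,k} ξ_j ξ_k B^{jk}, and let A(ξ0,ξ) be the (d+1)n × (d+1)n block matrix with first block row (B00 ξ0 + Σ_k ξ_k C^k, Σ_k ξ_k B^{1k}, ..., Σ_k ξ_k B^{dk}), and for i=1..d the (i+1)-th block row has −ξ_i I in the first block column, ξ0 I in the (i+1)-th block column, and 0 elsewhere. Then det A(ξ0,ξ) = ξ0^{(d−1)n} · det B(ξ0,ξ). -/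

import Mathlib

open Matrix

/-- The second-order symbol `B(ξ0, ξ) = ξ0² B00 + ξ0 Σ_j ξ_j C^j + Σ_{j,k} ξ_j ξ_k B^{jk}`. -/
noncomputable def Bsym (n d : ℕ) (B00 : Matrix (Fin n) (Fin n) ℝ)
    (Cc : Fin d → Matrix (Fin n) (Fin n) ℝ)
    (B : Fin d → Fin d → Matrix (Fin n) (Fin n) ℝ)
    (ξ0 : ℝ) (ξ : Fin d → ℝ) : Matrix (Fin n) (Fin n) ℝ :=
  ξ0 ^ 2 • B00 + ξ0 • ∑ j, ξ j • Cc j + ∑ j, ∑ k, (ξ j * ξ k) • B j k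

/-- The first-order block symbol `A(ξ0, ξ)`, of size `(d+1)n × (d+1)n`; block index
`Sum.inl ()` is the `P`-block and `Sum.inr i` the `Q_i`-blocks. -/
noncomputable def Asym (n d : ℕ) (B00 : Matrix (Fin n) (Fin n) ℝ)
    (Cc : Fin d → Matrix (Fin n) (Fin n) ℝ)
    (B : Fin d → Fin d → Matrix (Fin n) (Fin n) ℝ)
    (ξ0 : ℝ) (ξ : Fin d → ℝ) :
    Matrix ((Unit ⊕ Fin d) × Fin n) ((Unit ⊕ Fin d) × Fin n) ℝ :=
  fun p q =>
    match p, q with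
    | (Sum.inl _, a), (Sum.inl _, b) => (ξ0 • B00 + ∑ k, ξ k • Cc k) a b
    | (Sum.inl _, a), (Sum.inr j, b) => (∑ k, ξ k • B j k) a b
    | (Sum.inr i, a), (Sum.inl _, b) => if a = b then -ξ i else 0
    | (Sum.inr i, a), (Sum.inr j, b) => if i = j ∧ a = b then ξ0 else 0

open Polynomial

section Aux
variable (n d : ℕ) (B00 : Matrix (Fin n) (Fin n) ℝ)
    (Cc : Fin d → Matrix (Fin n) (Fin n) ℝ)
    (B : Fin d → Fin d → Matrix (Fin n) (Fin n) ℝ)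

lemma key (hd : 1 ≤ d) (ξ0 : ℝ) (hξ0 : ξ0 ≠ 0) (ξ : Fin d → ℝ) :
    (Asym n d B00 Cc B ξ0 ξ).det = ξ0 ^ ((d - 1) * n) * (Bsym n d B00 Cc B ξ0 ξ).det := by
  classical
  set A11 : Matrix (Unit × Fin n) (Unit × Fin n) ℝ :=
    fun p q => (ξ0 • B00 + ∑ k, ξ k • Cc k) p.2 q.2 with hA11
  set A12 : Matrix (Unit × Fin n) (Fin d × Fin n) ℝ :=
    fun p q => (∑ k, ξ k • B q.1 k) p.2 q.2 with hA12
  set A21 : Matrix (Fin d × Fin n) (Unit × Fin n) ℝ :=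
    fun p q => if p.2 = q.2 then -ξ p.1 else 0 with hA21
  set A22 : Matrix (Fin d × Fin n) (Fin d × Fin n) ℝ := ξ0 • 1 with hA22
  have hre : Asym n d B00 Cc B ξ0 ξ =
      (fromBlocks A11 A12 A21 A22).submatrix (Equiv.sumProdDistrib Unit (Fin d) (Fin n))
        (Equiv.sumProdDistrib Unit (Fin d) (Fin n)) := by
    ext ⟨p, a⟩ ⟨q, b⟩
    rcases p with _ | i <;> rcases q with _ | j <;>
      simp [Asym, Matrix.submatrix, fromBlocks, hA11, hA12, hA21, hA22, Matrix.smul_apply,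
        Matrix.one_apply, Prod.ext_iff, mul_ite, mul_zero, mul_one]
  letI : Invertible A22 := ⟨ξ0⁻¹ • 1, by
      rw [hA22, smul_mul_assoc, mul_smul_comm, one_mul, smul_smul, inv_mul_cancel₀ hξ0, one_smul],
    by
      rw [hA22, smul_mul_assoc, mul_smul_comm, one_mul, smul_smul, mul_inv_cancel₀ hξ0, one_smul]⟩
  have hinv : (⅟ A22) = ξ0⁻¹ • (1 : Matrix (Fin d × Fin n) (Fin d × Fin n) ℝ) := rfl
  rw [hre, det_submatrix_equiv_self, det_fromBlocks₂₂, hinv]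
  have hdet22 : A22.det = ξ0 ^ (d * n) := by
    rw [hA22, Matrix.det_smul, det_one, mul_one]
    simp [Fintype.card_prod]
  have hschur : A11 - A12 * (ξ0⁻¹ • (1 : Matrix (Fin d × Fin n) (Fin d × Fin n) ℝ)) * A21 =
      fun p q => (ξ0⁻¹ • Bsym n d B00 Cc B ξ0 ξ) p.2 q.2 := by
    rw [Matrix.mul_smul, Matrix.mul_one, Matrix.smul_mul]
    ext ⟨u, a⟩ ⟨v, b⟩
    have hmul : (A12 * A21) (u, a) (v, b)
        = -(∑ j, ∑ k, (ξ j * ξ k) • B j k) a b := by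
      rw [Matrix.mul_apply]
      simp only [Matrix.mul_apply, hA12, hA21]
      rw [Fintype.sum_prod_type]
      simp only [mul_ite, mul_zero, Finset.sum_ite_eq' , Finset.mem_univ, if_true]
      simp only [Matrix.sum_apply, Matrix.smul_apply, smul_eq_mul]
      rw [← Finset.sum_neg_distrib]
      refine Finset.sum_congr rfl fun j _ => ?_
      rw [Finset.sum_mul, ← Finset.sum_neg_distrib]
      refine Finset.sum_congr rfl fun k _ => ?_
      ring
    rw [Matrix.sub_apply, Matrix.smul_apply, hmul]
    simp only [Matrix.sub_apply, Matrix.smul_apply, hmul, hA11, Matrix.add_apply, Bsym,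
      Matrix.sum_apply, smul_eq_mul]
    field_simp
    ring
  rw [hschur, hdet22]
  have hone : (fun p q => (ξ0⁻¹ • Bsym n d B00 Cc B ξ0 ξ) p.2 q.2 :
      Matrix (Unit × Fin n) (Unit × Fin n) ℝ) =
      (ξ0⁻¹ • Bsym n d B00 Cc B ξ0 ξ).submatrix (Equiv.punitProd (Fin n))
        (Equiv.punitProd (Fin n)) := rfl
  rw [hone, det_submatrix_equiv_self, Matrix.det_smul, Fintype.card_fin, inv_pow]
  have hn : (d - 1) * n + n = d * n := by
    have h1 : d - 1 + 1 = d := Nat.succ_pred_eq_of_pos hd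
    calc (d - 1) * n + n = (d - 1 + 1) * n := by ring
      _ = d * n := by rw [h1]
  rw [← hn, pow_add]
  field_simp

variable (ξ : Fin d → ℝ)

noncomputable def APoly : Matrix ((Unit ⊕ Fin d) × Fin n) ((Unit ⊕ Fin d) × Fin n) ℝ[X] :=
  fun p q =>
    match p, q with
    | (Sum.inl _, a), (Sum.inl _, b) => X * C (B00 a b) + C ((∑ k, ξ k • Cc k) a b)
    | (Sum.inl _, a), (Sum.inr j, b) => C ((∑ k, ξ k • B j k) a b)
    | (Sum.inr i, a), (Sum.inl _, b) => if a = b then C (-ξ i) else 0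
    | (Sum.inr i, a), (Sum.inr j, b) => if i = j ∧ a = b then X else 0

noncomputable def BPoly : Matrix (Fin n) (Fin n) ℝ[X] :=
  fun a b => X ^ 2 * C (B00 a b) + X * C ((∑ j, ξ j • Cc j) a b) +
    C ((∑ j, ∑ k, (ξ j * ξ k) • B j k) a b)

lemma APoly_eval (t : ℝ) :
    (APoly n d B00 Cc B ξ).map (eval t) = Asym n d B00 Cc B t ξ := by
  ext ⟨p, a⟩ ⟨q, b⟩
  rcases p with _ | i <;> rcases q with _ | j <;>
    simp only [APoly, Asym, Matrix.map_apply, apply_ite (eval t), Matrix.add_apply,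
      Matrix.smul_apply, Matrix.sum_apply, smul_eq_mul, eval_add, eval_mul, eval_pow,
      eval_X, eval_C, eval_zero, eval_neg]

lemma BPoly_eval (t : ℝ) :
    (BPoly n d B00 Cc B ξ).map (eval t) = Bsym n d B00 Cc B t ξ := by
  ext a b
  simp only [BPoly, Bsym, Matrix.map_apply, Matrix.add_apply, Matrix.smul_apply,
    Matrix.sum_apply, smul_eq_mul, eval_add, eval_mul, eval_pow, eval_X, eval_C]

lemma det_eval_A (t : ℝ) :
    eval t (APoly n d B00 Cc B ξ).det = (Asym n d B00 Cc B t ξ).det := by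
  rw [← coe_evalRingHom, RingHom.map_det, RingHom.mapMatrix_apply]
  congr 1
  exact APoly_eval n d B00 Cc B ξ t

lemma det_eval_B (t : ℝ) :
    eval t (BPoly n d B00 Cc B ξ).det = (Bsym n d B00 Cc B t ξ).det := by
  rw [← coe_evalRingHom, RingHom.map_det, RingHom.mapMatrix_apply]
  congr 1
  exact BPoly_eval n d B00 Cc B ξ t

end Aux

/-- Lemma 1(i): `det A(ξ0,ξ) = ξ0^{(d−1)n} · det B(ξ0,ξ)`. -/
theorem stmt0 (n d : ℕ) (hd : 1 ≤ d) (B00 : Matrix (Fin n) (Fin n) ℝ)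
    (Cc : Fin d → Matrix (Fin n) (Fin n) ℝ)
    (B : Fin d → Fin d → Matrix (Fin n) (Fin n) ℝ)
    (ξ0 : ℝ) (ξ : Fin d → ℝ) :
    (Asym n d B00 Cc B ξ0 ξ).det = ξ0 ^ ((d - 1) * n) * (Bsym n d B00 Cc B ξ0 ξ).det := by
  have hpoly : (APoly n d B00 Cc B ξ).det =
      X ^ ((d - 1) * n) * (BPoly n d B00 Cc B ξ).det := by
    apply Polynomial.eq_of_infinite_eval_eq
    apply Set.Infinite.mono (s := {x : ℝ | x ≠ 0})
    · intro t ht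
      simp only [Set.mem_setOf_eq] at ht ⊢
      rw [det_eval_A, eval_mul, eval_pow, eval_X, det_eval_B]
      exact key n d B00 Cc B hd t ht ξ
    · have h0 : ({0} : Set ℝ)ᶜ.Infinite := (Set.finite_singleton 0).infinite_compl
      have : {x : ℝ | x ≠ 0} = ({0} : Set ℝ)ᶜ := by ext x; simp
      rw [this]; exact h0
  have := congrArg (eval ξ0) hpoly
  rwa [det_eval_A, eval_mul, eval_pow, eval_X, det_eval_B] at this
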